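/- For every n×n complex matrix A and every natural number j, one has the operator identity M_Π† (Π A Π* M_Π†)^j = (M_Π† A)^j M_Π†. -/
import Mathlib

open Matrix

lemma vmv_mulVec {n : ℕ} (a b v : Fin n → ℂ) :
    vecMulVec a b *ᵥ v = (b ⬝ᵥ v) • a := by
  ext i
  simp [vecMulVec_apply, mulVec, dotProduct, Finset.mul_sum, mul_comm, mul_left_comm]

lemma vecMul_vmv {n : ℕ} (u a b : Fin n → ℂ) :
    u ᵥ* vecMulVec a b = (u ⬝ᵥ a) • b := by
  ext i
  simp only [vecMulVec_apply, vecMul, dotProduct, Pi.smul_apply, smul_eq_mul, Finset.mul_sum]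
  rw [Finset.sum_mul]
  exact Finset.sum_congr rfl fun k _ => by ring

lemma mul_vmv {n : ℕ} (A : Matrix (Fin n) (Fin n) ℂ) (a b : Fin n → ℂ) :
    A * vecMulVec a b = vecMulVec (A *ᵥ a) b := by
  ext i j
  simp [vecMulVec_apply, Matrix.mul_apply, mulVec, dotProduct, Finset.sum_mul, mul_assoc]

lemma vmv_mul {n : ℕ} (A : Matrix (Fin n) (Fin n) ℂ) (a b : Fin n → ℂ) :
    vecMulVec a b * A = vecMulVec a (b ᵥ* A) := by
  ext i j
  simp [vecMulVec_apply, Matrix.mul_apply, vecMul, dotProduct, Finset.mul_sum, mul_assoc]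

/-- with `Π = I − (w x*)/(x*w)` and
`M_Π† = (I − (M⁻¹w w*)/(w*M⁻¹w)) M⁻¹`, for every `n×n` complex matrix `A` and every
natural number `j` one has `M_Π† (Π A Π* M_Π†)^j = (M_Π† A)^j M_Π†`. -/
theorem stabilized_preconditioner_power_identity
    (n : ℕ) (M : Matrix (Fin n) (Fin n) ℂ) (hM : IsUnit M.det)
    (x w : Fin n → ℂ)
    (hxw : star x ⬝ᵥ w ≠ 0)
    (hwMw : star w ⬝ᵥ M⁻¹ *ᵥ w ≠ 0)
    (P : Matrix (Fin n) (Fin n) ℂ)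
    (hP : P = 1 - (star x ⬝ᵥ w)⁻¹ • vecMulVec w (star x))
    (MPd : Matrix (Fin n) (Fin n) ℂ)
    (hMPd : MPd = (1 - (star w ⬝ᵥ M⁻¹ *ᵥ w)⁻¹ • vecMulVec (M⁻¹ *ᵥ w) (star w)) * M⁻¹) :
    ∀ (A : Matrix (Fin n) (Fin n) ℂ) (j : ℕ),
      MPd * (P * A * Pᴴ * MPd) ^ j = (MPd * A) ^ j * MPd := by
  have hvw : MPd *ᵥ w = 0 := by
    rw [hMPd, ← mulVec_mulVec, sub_mulVec, one_mulVec, smul_mulVec,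
      vmv_mulVec, smul_smul, inv_mul_cancel₀ hwMw, one_smul, sub_self]
  have hwv : star w ᵥ* MPd = 0 := by
    have hsm : (star w ⬝ᵥ M⁻¹ *ᵥ w)⁻¹ • vecMulVec (M⁻¹ *ᵥ w) (star w)
        = vecMulVec ((star w ⬝ᵥ M⁻¹ *ᵥ w)⁻¹ • (M⁻¹ *ᵥ w)) (star w) := by
      ext i j; simp [vecMulVec_apply, mul_assoc]
    have hs : star w ᵥ* ((star w ⬝ᵥ M⁻¹ *ᵥ w)⁻¹ • vecMulVec (M⁻¹ *ᵥ w) (star w)) = star w := by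
      rw [hsm, vecMul_vmv, dotProduct_smul, smul_eq_mul, inv_mul_cancel₀ hwMw, one_smul]
    rw [hMPd, ← vecMul_vecMul, vecMul_sub, vecMul_one, hs, sub_self, zero_vecMul]
  have hMP : MPd * P = MPd := by
    rw [hP, mul_sub, mul_one, Matrix.mul_smul, mul_vmv, hvw]
    have : vecMulVec (0 : Fin n → ℂ) (star x) = 0 := by
      ext i j; simp [vecMulVec_apply]
    rw [this, smul_zero, sub_zero]
  have hPM : Pᴴ * MPd = MPd := by
    rw [hP, conjTranspose_sub, conjTranspose_one, conjTranspose_smul, sub_mul, one_mul,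
      Matrix.smul_mul]
    have hct : (vecMulVec w (star x))ᴴ = vecMulVec x (star w) := by
      ext i j; simp [vecMulVec_apply, conjTranspose_apply, mul_comm]
    rw [hct, vmv_mul, hwv]
    have : vecMulVec x (0 : Fin n → ℂ) = 0 := by
      ext i j; simp [vecMulVec_apply]
    rw [this, smul_zero, sub_zero]
  intro A j
  induction j with
  | zero => simp
  | succ j ih =>
    have key : MPd * (P * A * Pᴴ * MPd) = MPd * A * MPd := by
      calc MPd * (P * A * Pᴴ * MPd) = MPd * P * A * (Pᴴ * MPd) := by
            simp only [mul_assoc]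
        _ = MPd * A * MPd := by rw [hMP, hPM]
    rw [pow_succ', ← mul_assoc, key, mul_assoc, ih, ← mul_assoc, ← pow_succ']
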